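/- Let a, b, c, d ∈ ℂ, set s = a + b + c + d, and assume s ≠ 0 and that 2n + s − 2, 2n + s − 1, 2n + s are all nonzero. Set φ₀ = a + c − 1, δ₀ = −(b + d), v₀ = −i (a − b − c + d)/(2s), and b̃₀ = (i/4)(a + b − c − d). Then for every n ≥ 0: ½ (δ₀ + φ₀ + 1)(φ₀ − δ₀ + 1)(φ₀ − δ₀ − 1) v₀ / ((2n + φ₀ − δ₀ − 1)(2n + φ₀ − δ₀ + 1)) + b̃₀ = i [ −(n + a + b + c + d − 1)(n + a + c)(n + a + d) / ((2n + a + b + c + d − 1)(2n + a + b + c + d)) + n (n + b + c − 1)(n + b + d − 1) / ((2n + a + b + c + d − 2)(2n + a + b + c + d − 1)) + a ]. -/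

import Mathlib

set_option maxHeartbeats 2000000
open Complex

/-- With `Δ = ¼`, `φ₀ = a + c − 1`, `δ₀ = −(b+d)`, `v₀ = −i(a−b−c+d)/(2s)` and
`b̃₀ = (i/4)(a + b − c − d)`, the diagonal coefficient `bₙ` of the algebra
representation equals the diagonal recurrence coefficient of the monic
continuous Hahn polynomials. -/
theorem stmt_14 (a b c d : ℂ) (hs : a + b + c + d ≠ 0) :
    ∀ n : ℕ,
      2 * (n : ℂ) + (a + b + c + d) - 2 ≠ 0 →
      2 * (n : ℂ) + (a + b + c + d) - 1 ≠ 0 →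
      2 * (n : ℂ) + (a + b + c + d) ≠ 0 →
      (1 / 2) * ((-(b + d)) + (a + c - 1) + 1) *
          ((a + c - 1) - (-(b + d)) + 1) * ((a + c - 1) - (-(b + d)) - 1) *
          (-Complex.I * (a - b - c + d) / (2 * (a + b + c + d))) /
          ((2 * (n : ℂ) + (a + c - 1) - (-(b + d)) - 1) *
            (2 * (n : ℂ) + (a + c - 1) - (-(b + d)) + 1)) +
        (Complex.I / 4) * (a + b - c - d) =
      Complex.I *
        (-((n : ℂ) + a + b + c + d - 1) * ((n : ℂ) + a + c) * ((n : ℂ) + a + d) /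
            ((2 * (n : ℂ) + a + b + c + d - 1) * (2 * (n : ℂ) + a + b + c + d)) +
          (n : ℂ) * ((n : ℂ) + b + c - 1) * ((n : ℂ) + b + d - 1) /
            ((2 * (n : ℂ) + a + b + c + d - 2) *
              (2 * (n : ℂ) + a + b + c + d - 1)) +
          a) := by
  intro n h2 h1 h0
  have e1 : 2 * (n : ℂ) + (a + c - 1) - (-(b + d)) - 1 = 2 * (n : ℂ) + (a + b + c + d) - 2 := by ring
  have e2 : 2 * (n : ℂ) + (a + c - 1) - (-(b + d)) + 1 = 2 * (n : ℂ) + (a + b + c + d) := by ring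
  rw [e1, e2]
  have h1' : 2 * (n : ℂ) + a + b + c + d - 1 ≠ 0 := by
    intro h; apply h1; rw [← h]; ring
  have h0' : 2 * (n : ℂ) + a + b + c + d ≠ 0 := by
    intro h; apply h0; rw [← h]; ring
  have h2' : 2 * (n : ℂ) + a + b + c + d - 2 ≠ 0 := by
    intro h; apply h2; rw [← h]; ring
  field_simp
  ring
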